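/- d'Ocagne identity for generalized hybrid Fibonacci numbers: for integers r ≥ m ≥ 0, HJ_r·HJ_{m+1} − HJ_{r+1}·HJ_m = (−q)^m·A·B·[(HL_0 − (q³+pq−q+1))·F_{r−m} + q·(HF_0 − ω)·L_{r−m}]. -/

import Mathlib

open Matrix

noncomputable section

/-- Hybrid numbers modelled via their faithful matrix representation:
the map a+b·i+c·ε+d·h ↦ !![a+c, b-c+d; c-b+d, a-c] is an ℝ-algebra
isomorphism onto M₂(ℝ). -/
abbrev HybridK : Type := Matrix (Fin 2) (Fin 2) ℝ

/-- the hybrid unit i (i² = −1) -/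
def hi : HybridK := !![0, 1; -1, 0]

/-- the hybrid unit ε (ε² = 0) -/
def heps : HybridK := !![1, -1; 1, -1]

/-- the hybrid unit h (h² = 1) -/
def hh : HybridK := !![0, 1; 1, 0]

/-- the hybrid number a + b·i + c·ε + d·h -/
def hyb (a b c d : ℝ) : HybridK := a • (1 : HybridK) + b • hi + c • heps + d • hh

/-- hybrid sequence attached to a real sequence:  x_n + x_{n+1}·i + x_{n+2}·ε + x_{n+3}·h -/
def hybSeq (x : ℕ → ℝ) (n : ℕ) : HybridK := hyb (x n) (x (n+1)) (x (n+2)) (x (n+3))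


theorem binet_aux (α β : ℝ) (x : ℕ → ℝ) (C D : ℝ)
    (h0 : x 0 = C + D) (h1 : x 1 = C*α + D*β)
    (hrec : ∀ n, x (n+2) = (α+β)*x (n+1) + (-(α*β))*x n) :
    ∀ n, x n = C*α^n + D*β^n := by
  have key : ∀ n, x n = C*α^n + D*β^n ∧ x (n+1) = C*α^(n+1) + D*β^(n+1) := by
    intro n
    induction n with
    | zero => exact ⟨by simpa using h0, by simpa using h1⟩
    | succ k ih =>
      refine ⟨ih.2, ?_⟩
      rw [hrec, ih.1, ih.2]; ring
  exact fun n => (key n).1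

set_option maxRecDepth 10000 in
set_option maxHeartbeats 1600000 in
/-- d'Ocagne identity for generalized hybrid Fibonacci numbers. -/
theorem hybrid_horadam_docagne (p q a b α β : ℝ) (hpq : p ^ 2 + 4 * q > 0)
    (hα : α ^ 2 = p * α + q) (hβ : β ^ 2 = p * β + q) (hab : α > β)
    (F L J : ℕ → ℝ) (hF0 : F 0 = 0) (hF1 : F 1 = 1)
    (hFrec : ∀ n : ℕ, F (n + 2) = p * F (n + 1) + q * F n)
    (hL0 : L 0 = 2) (hL1 : L 1 = p)
    (hLrec : ∀ n : ℕ, L (n + 2) = p * L (n + 1) + q * L n)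
    (hJ0 : J 0 = a) (hJ1 : J 1 = b)
    (hJrec : ∀ n : ℕ, J (n + 2) = p * J (n + 1) + q * J n) :
    ∀ r m : ℕ, m ≤ r →
      hybSeq J r * hybSeq J (m + 1) - hybSeq J (r + 1) * hybSeq J m
        = ((-q) ^ m * (b - a * β) * (b - a * α)) •
          (F (r - m) • (hyb 2 p (p ^ 2 + 2 * q) (p ^ 3 + 3 * p * q)
              - (q ^ 3 + p * q - q + 1) • (1 : HybridK))
            + (q * L (r - m)) •
              (hyb 0 1 p (p ^ 2 + q) - hyb 0 (1 - p) (-q) (p ^ 2 + q + 1))) := by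
  have hd : α - β ≠ 0 := sub_ne_zero.mpr (ne_of_gt hab)
  have hp : p = α + β := by
    have h2 : (α - β) * (α + β) = (α - β) * p := by linear_combination hα - hβ
    exact (mul_left_cancel₀ hd h2).symm
  subst hp
  have hq : q = -(α * β) := by linear_combination -hα
  subst hq
  have hF : ∀ n, F n = (1/(α-β))*α^n + (-(1/(α-β)))*β^n := by
    refine binet_aux α β F _ _ ?_ ?_ hFrec
    · rw [hF0]; ring
    · rw [hF1]; field_simp; try ring
  have hL : ∀ n, L n = 1*α^n + 1*β^n := by
    refine binet_aux α β L _ _ ?_ ?_ hLrec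
    · rw [hL0]; ring
    · rw [hL1]; ring
  have hJ : ∀ n, J n = ((b - a*β)/(α-β))*α^n + (-((b - a*α)/(α-β)))*β^n := by
    refine binet_aux α β J _ _ ?_ ?_ hJrec
    · rw [hJ0]; field_simp; ring
    · rw [hJ1]; field_simp; ring
  intro r m hmr
  obtain ⟨k, rfl⟩ := Nat.exists_eq_add_of_le hmr
  simp only [Nat.add_sub_cancel_left]
  ext i j
  fin_cases i <;> fin_cases j <;>
    · simp only [hybSeq, hyb, hi, heps, hh, Matrix.mul_apply, Fin.sum_univ_two,
        Matrix.add_apply, Matrix.sub_apply, Matrix.smul_apply, Matrix.one_apply,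
        Matrix.cons_val', Matrix.cons_val_zero, Matrix.cons_val_one, Matrix.head_cons,
        Matrix.head_fin_const, Matrix.empty_val', Matrix.cons_val_fin_one,
        Fin.isValue, smul_eq_mul, if_true, if_false, Fin.zero_eq_one_iff, Fin.one_eq_zero_iff,
        Nat.reduceEqDiff, ite_true, ite_false, mul_one, mul_zero, one_ne_zero, zero_ne_one,
        reduceIte, Matrix.of_apply, Fin.zero_eta, Fin.mk_one]
      simp only [hJ, hF, hL]
      field_simp
      ring
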